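/- Let n ≥ 1 and m ∈ {1, …, n+1}. The vectors of minimum norm in the coset mα_n + A_n are exactly the vectors (m/(n+1)) Σ_{i ∉ I} e_i − ((n+1−m)/(n+1)) Σ_{i ∈ I} e_i for I a subset of [n+1] of size m, and their common squared norm is m(n+1−m)/(n+1). -/

import Mathlib

lemma int_sq_add_nonneg (z : ℤ) : 0 ≤ z ^ 2 + z := by
  rcases le_or_gt 0 z with h | h
  · nlinarith
  · have h1 : z + 1 ≤ 0 := h
    nlinarith

/-- Let n ≥ 1 and m ∈ {1, …, n+1}.  The vectors of minimum norm in the coset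
`m·α_n + A_n` are exactly the vectors
`(m/(n+1)) Σ_{i ∉ I} e_i − ((n+1−m)/(n+1)) Σ_{i ∈ I} e_i` for `I ⊆ [n+1]` with `|I| = m`,
and their common squared norm is `m(n+1−m)/(n+1)`. -/
theorem stmt3 (n m : ℕ) (hn : 1 ≤ n) (hm1 : 1 ≤ m) (hm2 : m ≤ n + 1)
    (A : Set (Fin (n + 1) → ℝ))
    (hA : A = {x | (∀ i, ∃ z : ℤ, x i = (z : ℝ)) ∧ ∑ i, x i = 0})
    (α : Fin (n + 1) → ℝ)
    (hα : α = fun i : Fin (n + 1) => if (i : ℕ) = n then -((n : ℝ) / (n + 1)) else 1 / (n + 1)) :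
    (∀ v : Fin (n + 1) → ℝ, v - (m : ℝ) • α ∈ A →
        (m : ℝ) * ((n : ℝ) + 1 - m) / ((n : ℝ) + 1) ≤ ∑ t, v t * v t) ∧
    (∀ v : Fin (n + 1) → ℝ,
        (v - (m : ℝ) • α ∈ A ∧ ∑ t, v t * v t = (m : ℝ) * ((n : ℝ) + 1 - m) / ((n : ℝ) + 1)) ↔
        (∃ I : Finset (Fin (n + 1)), I.card = m ∧
          v = fun i => if i ∈ I then -(((n : ℝ) + 1 - m) / ((n : ℝ) + 1))
                       else (m : ℝ) / ((n : ℝ) + 1))) := by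
  have hne : ((n : ℝ) + 1) ≠ 0 := by positivity
  -- sum of α is 0
  have hαsum : ∑ i, α i = 0 := by
    subst hα
    rw [Fin.sum_univ_castSucc]
    have h1 : ∀ i : Fin n, ((i.castSucc : Fin (n + 1)) : ℕ) ≠ n := by
      intro i
      simpa using i.isLt.ne
    rw [Finset.sum_congr rfl (fun i _ => if_neg (h1 i))]
    simp only [Fin.val_last, if_pos rfl, Finset.sum_const, Finset.card_univ, Fintype.card_fin,
      nsmul_eq_mul]
    field_simp
    simp only [if_true]
    have hnn : ((n : ℝ) + 1) * ((n : ℝ) / ((n : ℝ) + 1)) = n := by field_simp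
    linear_combination -hnn
  -- key structure lemma
  have key : ∀ v : Fin (n + 1) → ℝ, v - (m : ℝ) • α ∈ A →
      ∃ w : Fin (n + 1) → ℤ, (∀ i, v i = (w i : ℝ) + (m : ℝ) / ((n : ℝ) + 1)) ∧
        (∑ i, (w i : ℝ)) = -(m : ℝ) := by
    intro v hv
    rw [hA] at hv
    obtain ⟨hz, hs⟩ := hv
    have hzz : ∀ i, ∃ z : ℤ, v i = (z : ℝ) + (m : ℝ) / ((n : ℝ) + 1) := by
      intro i
      obtain ⟨z, hz⟩ := hz i
      simp only [Pi.sub_apply, Pi.smul_apply, smul_eq_mul, hα] at hz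
      by_cases h : (i : ℕ) = n
      · refine ⟨z - m, ?_⟩
        rw [if_pos h] at hz
        have hvi : v i = z + (m : ℝ) * (-((n : ℝ) / (n + 1))) := by linarith
        rw [hvi]
        push_cast
        field_simp
        ring
      · refine ⟨z, ?_⟩
        rw [if_neg h] at hz
        have hvi : v i = z + (m : ℝ) * (1 / ((n : ℝ) + 1)) := by linarith
        rw [hvi]
        field_simp
    choose w hw using hzz
    refine ⟨w, hw, ?_⟩
    have hvsum : ∑ i, v i = 0 := by
      have h1 : ∑ i, (v i - (m : ℝ) * α i) = 0 := by
        simpa [Pi.sub_apply, smul_eq_mul] using hs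
      have h2 : ∑ i, (v i - (m : ℝ) * α i) = (∑ i, v i) - m * ∑ i, α i := by
        rw [Finset.sum_sub_distrib, Finset.mul_sum]
      rw [h2, hαsum] at h1
      linarith
    have h3 : ∑ i, ((w i : ℝ) + (m : ℝ) / ((n : ℝ) + 1)) = 0 := by
      rw [← Finset.sum_congr rfl (fun i _ => (hw i))]
      exact hvsum
    rw [Finset.sum_add_distrib, Finset.sum_const, Finset.card_univ, Fintype.card_fin,
      nsmul_eq_mul] at h3
    have h4 : ((n : ℝ) + 1) * ((m : ℝ) / ((n : ℝ) + 1)) = m := by field_simp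
    push_cast at h3
    linarith
  -- the squared-sum identity
  have sq_id : ∀ (w : Fin (n + 1) → ℤ) (v : Fin (n + 1) → ℝ),
      (∀ i, v i = (w i : ℝ) + (m : ℝ) / ((n : ℝ) + 1)) → (∑ i, (w i : ℝ)) = -(m : ℝ) →
      ∑ t, v t * v t = (∑ i, ((w i : ℝ) ^ 2 + (w i : ℝ)))
        + (m : ℝ) * ((n : ℝ) + 1 - m) / ((n : ℝ) + 1) := by
    intro w v hw hsw
    have h1 : ∀ t, v t * v t = ((w t : ℝ) ^ 2 + (w t : ℝ))
        + (((m : ℝ) / ((n : ℝ) + 1)) ^ 2 + (2 * ((m : ℝ) / ((n : ℝ) + 1)) - 1) * (w t : ℝ)) := by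
      intro t
      rw [hw t]
      ring
    rw [Finset.sum_congr rfl (fun t _ => h1 t), Finset.sum_add_distrib]
    congr 1
    rw [Finset.sum_add_distrib, Finset.sum_const, ← Finset.mul_sum, hsw, Finset.card_univ,
      Fintype.card_fin, nsmul_eq_mul]
    push_cast
    field_simp
    ring
  constructor
  · intro v hv
    obtain ⟨w, hw, hsw⟩ := key v hv
    rw [sq_id w v hw hsw]
    have h0 : 0 ≤ ∑ i, ((w i : ℝ) ^ 2 + (w i : ℝ)) := by
      apply Finset.sum_nonneg
      intro i _
      exact_mod_cast int_sq_add_nonneg (w i)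
    linarith
  · intro v
    constructor
    · rintro ⟨hv, heq⟩
      obtain ⟨w, hw, hsw⟩ := key v hv
      have hS : ∑ i, ((w i : ℝ) ^ 2 + (w i : ℝ)) = 0 := by
        have h1 := sq_id w v hw hsw
        rw [heq] at h1
        linarith
      have hw01 : ∀ i, w i = 0 ∨ w i = -1 := by
        intro i
        have h0 : ∀ j ∈ Finset.univ, (0 : ℝ) ≤ (w j : ℝ) ^ 2 + (w j : ℝ) := fun j _ => by
          exact_mod_cast int_sq_add_nonneg (w j)
        have h1 := (Finset.sum_eq_zero_iff_of_nonneg h0).mp hS i (Finset.mem_univ i)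
        have h2 : (w i) ^ 2 + w i = 0 := by exact_mod_cast h1
        have h3 : w i * (w i + 1) = 0 := by linear_combination h2
        rcases mul_eq_zero.mp h3 with h | h
        · exact Or.inl h
        · exact Or.inr (by linarith)
      set I : Finset (Fin (n + 1)) := Finset.univ.filter (fun i => w i = -1) with hIdef
      have hwI : ∀ i, i ∈ I ↔ w i = -1 := by
        intro i; simp [hIdef]
      have hsum_int : ∑ i, w i = -(m : ℤ) := by
        have := hsw
        exact_mod_cast (by push_cast; exact hsw : ((∑ i, w i : ℤ) : ℝ) = ((-(m : ℤ) : ℤ) : ℝ))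
      have hcard : I.card = m := by
        have h1 : ∑ i, w i = ∑ i ∈ I, w i + ∑ i ∈ Iᶜ, w i :=
          (Finset.sum_add_sum_compl I _).symm
        have h2 : ∑ i ∈ I, w i = -(I.card : ℤ) := by
          rw [Finset.sum_congr rfl (fun i hi => (hwI i).mp hi)]
          simp
        have h3 : ∑ i ∈ Iᶜ, w i = 0 := by
          apply Finset.sum_eq_zero
          intro i hi
          rcases hw01 i with h | h
          · exact h
          · exact absurd ((hwI i).mpr h) (Finset.mem_compl.mp hi)
        have h4 : (I.card : ℤ) = m := by
          have h5 := hsum_int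
          rw [h1, h2, h3] at h5
          omega
        exact_mod_cast h4
      refine ⟨I, hcard, ?_⟩
      funext i
      by_cases h : i ∈ I
      · rw [if_pos h, hw i, (hwI i).mp h]
        push_cast
        field_simp
        ring
      · have hw0 : w i = 0 := by
          rcases hw01 i with h' | h'
          · exact h'
          · exact absurd ((hwI i).mpr h') h
        rw [if_neg h, hw i, hw0]
        push_cast
        ring
    · rintro ⟨I, hI, rfl⟩
      have hcast : ((I.card : ℕ) : ℝ) = (m : ℝ) := by rw [hI]
      have hsum_ite : ∀ a b : ℝ, ∑ i : Fin (n + 1), (if i ∈ I then a else b)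
          = (m : ℝ) * a + ((n : ℝ) + 1 - m) * b := by
        intro a b
        rw [Finset.sum_ite, Finset.sum_const, Finset.sum_const]
        have h1 : (Finset.univ.filter (fun i => i ∈ I)) = I := by
          ext i; simp
        have h2 : (Finset.univ.filter (fun i => ¬ i ∈ I)) = Iᶜ := by
          ext i; simp
        rw [h1, h2, hI, Finset.card_compl, hI]
        simp only [Fintype.card_fin, nsmul_eq_mul]
        have h3 : ((n + 1 - m : ℕ) : ℝ) = (n : ℝ) + 1 - m := by
          push_cast [Nat.cast_sub hm2]
          ring
        rw [h3]
      constructor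
      · rw [hA]
        constructor
        · intro i
          simp only [Pi.sub_apply, Pi.smul_apply, smul_eq_mul, hα]
          by_cases hi : i ∈ I <;> by_cases hn' : (i : ℕ) = n
          · refine ⟨(m : ℤ) - 1, ?_⟩
            rw [if_pos hi, if_pos hn']
            push_cast
            field_simp
            ring
          · refine ⟨-1, ?_⟩
            rw [if_pos hi, if_neg hn']
            push_cast
            field_simp
            ring
          · refine ⟨m, ?_⟩
            rw [if_neg hi, if_pos hn']
            push_cast
            field_simp
            ring
          · refine ⟨0, ?_⟩
            rw [if_neg hi, if_neg hn']
            push_cast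
            field_simp
            ring
        · have h1 : ∑ i : Fin (n + 1), ((if i ∈ I then -(((n : ℝ) + 1 - m) / ((n : ℝ) + 1))
              else (m : ℝ) / ((n : ℝ) + 1)) - (m : ℝ) * α i)
              = (∑ i : Fin (n + 1), (if i ∈ I then -(((n : ℝ) + 1 - m) / ((n : ℝ) + 1))
              else (m : ℝ) / ((n : ℝ) + 1))) - m * ∑ i, α i := by
            rw [Finset.sum_sub_distrib, Finset.mul_sum]
          simp only [Pi.sub_apply, Pi.smul_apply, smul_eq_mul]
          rw [h1, hαsum, hsum_ite]
          field_simp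
          ring
      · have h1 : ∀ i : Fin (n + 1), (if i ∈ I then -(((n : ℝ) + 1 - m) / ((n : ℝ) + 1))
            else (m : ℝ) / ((n : ℝ) + 1)) * (if i ∈ I then -(((n : ℝ) + 1 - m) / ((n : ℝ) + 1))
            else (m : ℝ) / ((n : ℝ) + 1))
            = if i ∈ I then (((n : ℝ) + 1 - m) / ((n : ℝ) + 1)) ^ 2
            else ((m : ℝ) / ((n : ℝ) + 1)) ^ 2 := by
          intro i
          split <;> ring
        rw [Finset.sum_congr rfl (fun i _ => h1 i), hsum_ite]
        field_simp
        ring
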